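/- Let G act on a tree T without edge inversions, let e be a collapsible edge, and let T' be obtained from T by the elementary collapse of e. Then every edge stabiliser for the action on T' is an edge stabiliser for the action on T, and every vertex stabiliser for T' is a vertex stabiliser for T. -/
import Mathlib



/-- The action of `G` on the vertices preserves adjacency (acts by simplicial
automorphisms). -/
def PreservesAdj (G : Type*) {V : Type*} [Group G] [MulAction G V]
    (T : SimpleGraph V) : Prop :=
  ∀ (g : G) (u v : V), T.Adj u v → T.Adj (g • u) (g • v)

/-- The action has no edge inversions. -/
def NoInversions (G : Type*) {V : Type*} [Group G] [MulAction G V]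
    (T : SimpleGraph V) : Prop :=
  ∀ (g : G) (u v : V), T.Adj u v → ¬ (g • u = v ∧ g • v = u)

/-- The relation identifying each translate `g • u` with `g • v`; the collapsed tree has
vertex set `Quot (collapseRel G u v)`. -/
def collapseRel (G : Type*) {V : Type*} [Group G] [MulAction G V] (u v : V) :
    V → V → Prop :=
  fun x y => ∃ g : G, x = g • u ∧ y = g • v


section Aux

variable {G V : Type*} [Group G] [MulAction G V]

open Classical in
noncomputable def collapseProj (G : Type*) {V : Type*} [Group G] [MulAction G V]
    (u v x : V) : V :=
  if h : x ∈ MulAction.orbit G u then (MulAction.mem_orbit_iff.mp h).choose • v else x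

lemma collapseProj_smul_u {u v : V}
    (hstab : MulAction.stabilizer G u ≤ MulAction.stabilizer G v) (g : G) :
    collapseProj G u v (g • u) = g • v := by
  have hmem : g • u ∈ MulAction.orbit G u := MulAction.mem_orbit u g
  have hspec : (MulAction.mem_orbit_iff.mp hmem).choose • u = g • u :=
    (MulAction.mem_orbit_iff.mp hmem).choose_spec
  have hst : g⁻¹ * (MulAction.mem_orbit_iff.mp hmem).choose ∈ MulAction.stabilizer G u := by
    rw [MulAction.mem_stabilizer_iff, mul_smul, hspec, inv_smul_smul]
  have hv : (g⁻¹ * (MulAction.mem_orbit_iff.mp hmem).choose) • v = v := hstab hst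
  rw [collapseProj, dif_pos hmem]
  rw [mul_smul] at hv
  calc (MulAction.mem_orbit_iff.mp hmem).choose • v
      = g • g⁻¹ • (MulAction.mem_orbit_iff.mp hmem).choose • v := by rw [smul_inv_smul]
    _ = g • v := by rw [hv]

lemma collapseProj_of_not_mem {u v x : V} (h : x ∉ MulAction.orbit G u) :
    collapseProj G u v x = x := by
  rw [collapseProj, dif_neg h]

lemma collapseProj_smul {u v : V}
    (hstab : MulAction.stabilizer G u ≤ MulAction.stabilizer G v) (g : G) (x : V) :
    collapseProj G u v (g • x) = g • collapseProj G u v x := by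
  by_cases h : x ∈ MulAction.orbit G u
  · obtain ⟨k, rfl⟩ := MulAction.mem_orbit_iff.mp h
    rw [collapseProj_smul_u hstab, ← mul_smul, collapseProj_smul_u hstab, mul_smul]
  · have h' : g • x ∉ MulAction.orbit G u := by
      intro hc
      obtain ⟨c, hc⟩ := MulAction.mem_orbit_iff.mp hc
      exact h (MulAction.mem_orbit_iff.mpr ⟨g⁻¹ * c, by rw [mul_smul, hc, inv_smul_smul]⟩)
    rw [collapseProj_of_not_mem h, collapseProj_of_not_mem h']

lemma orbit_ne' {u v : V} (horb : v ∉ MulAction.orbit G u) (g h : G) :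
    g • u ≠ h • v := by
  intro hc
  exact horb (MulAction.mem_orbit_iff.mpr
    ⟨h⁻¹ * g, by rw [mul_smul, hc, inv_smul_smul]⟩)

lemma smul_v_not_mem {u v : V} (horb : v ∉ MulAction.orbit G u) (h : G) :
    h • v ∉ MulAction.orbit G u := by
  intro hc
  obtain ⟨c, hc⟩ := MulAction.mem_orbit_iff.mp hc
  exact orbit_ne' horb c h hc

lemma collapse_quot_eq_iff {u v : V}
    (hstab : MulAction.stabilizer G u ≤ MulAction.stabilizer G v)
    (horb : v ∉ MulAction.orbit G u) (x y : V) :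
    Quot.mk (collapseRel G u v) x = Quot.mk (collapseRel G u v) y ↔
      collapseProj G u v x = collapseProj G u v y := by
  constructor
  · intro h
    have hresp : ∀ a b, collapseRel G u v a b →
        collapseProj G u v a = collapseProj G u v b := by
      rintro a b ⟨g, rfl, rfl⟩
      rw [collapseProj_smul_u hstab, collapseProj_of_not_mem (smul_v_not_mem horb g)]
    exact congrArg (Quot.lift _ hresp) h
  · intro h
    by_cases hx : x ∈ MulAction.orbit G u <;> by_cases hy : y ∈ MulAction.orbit G u
    · obtain ⟨a, rfl⟩ := MulAction.mem_orbit_iff.mp hx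
      obtain ⟨b, rfl⟩ := MulAction.mem_orbit_iff.mp hy
      rw [collapseProj_smul_u hstab, collapseProj_smul_u hstab] at h
      calc Quot.mk (collapseRel G u v) (a • u) = Quot.mk (collapseRel G u v) (a • v) :=
            Quot.sound ⟨a, rfl, rfl⟩
        _ = Quot.mk (collapseRel G u v) (b • v) := by rw [h]
        _ = Quot.mk (collapseRel G u v) (b • u) := (Quot.sound ⟨b, rfl, rfl⟩).symm
    · obtain ⟨a, rfl⟩ := MulAction.mem_orbit_iff.mp hx
      rw [collapseProj_smul_u hstab, collapseProj_of_not_mem hy] at h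
      rw [← h]
      exact Quot.sound ⟨a, rfl, rfl⟩
    · obtain ⟨b, rfl⟩ := MulAction.mem_orbit_iff.mp hy
      rw [collapseProj_smul_u hstab, collapseProj_of_not_mem hx] at h
      rw [h]
      exact (Quot.sound ⟨b, rfl, rfl⟩).symm
    · rw [collapseProj_of_not_mem hx, collapseProj_of_not_mem hy] at h
      rw [h]

end Aux

section Tree

open SimpleGraph

lemma tree_two_paths {V : Type*} {T : SimpleGraph V} (hT : T.IsTree) {a b c d : V}
    (h1 : T.Adj a b) (h2 : T.Adj b c) (h3 : T.Adj a d) (h4 : T.Adj d c)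
    (hac : a ≠ c) : b = d := by
  have p1 : (Walk.cons h1 (Walk.cons h2 Walk.nil)).IsPath := by
    simp [Walk.isPath_def, h1.ne, h2.ne, hac]
  have p2 : (Walk.cons h3 (Walk.cons h4 Walk.nil)).IsPath := by
    simp [Walk.isPath_def, h3.ne, h4.ne, hac]
  have heq := (hT.existsUnique_path a c).unique p1 p2
  have hs := congrArg Walk.support heq
  simpa [Walk.support] using hs

lemma tree_three_paths {V : Type*} {T : SimpleGraph V} (hT : T.IsTree) {a b c d b' c' : V}
    (h1 : T.Adj a b) (h2 : T.Adj b c) (h3 : T.Adj c d)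
    (h1' : T.Adj a b') (h2' : T.Adj b' c') (h3' : T.Adj c' d)
    (hac : a ≠ c) (had : a ≠ d) (hbd : b ≠ d)
    (hac' : a ≠ c') (hbd' : b' ≠ d) : b = b' := by
  have p1 : (Walk.cons h1 (Walk.cons h2 (Walk.cons h3 Walk.nil))).IsPath := by
    simp [Walk.isPath_def, h1.ne, h2.ne, h3.ne, hac, had, hbd]
  have p2 : (Walk.cons h1' (Walk.cons h2' (Walk.cons h3' Walk.nil))).IsPath := by
    simp [Walk.isPath_def, h1'.ne, h2'.ne, h3'.ne, hac', had, hbd']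
  have heq := (hT.existsUnique_path a d).unique p1 p2
  have hs := congrArg Walk.support heq
  simp [Walk.support] at hs
  exact hs.1

end Tree

theorem collapse_stabilizers {G V : Type*} [Group G] [MulAction G V]
    (T : SimpleGraph V) (hT : T.IsTree)
    (hpres : PreservesAdj G T) (hinv : NoInversions G T)
    (u v : V) (he : T.Adj u v)
    (hstab : MulAction.stabilizer G u ≤ MulAction.stabilizer G v)
    (horb : v ∉ MulAction.orbit G u) :
    (∀ x : V, ∃ x' : V, ∀ g : G,
        Quot.mk (collapseRel G u v) (g • x) = Quot.mk (collapseRel G u v) x ↔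
          g • x' = x') ∧
    (∀ x y : V, T.Adj x y →
        Quot.mk (collapseRel G u v) x ≠ Quot.mk (collapseRel G u v) y →
        ∃ x' y' : V, T.Adj x' y' ∧ ∀ g : G,
          (Quot.mk (collapseRel G u v) (g • x) = Quot.mk (collapseRel G u v) x ∧
           Quot.mk (collapseRel G u v) (g • y) = Quot.mk (collapseRel G u v) y) ↔
          (g • x' = x' ∧ g • y' = y')) := by
  have Q := collapse_quot_eq_iff (G := G) (V := V) (u := u) (v := v) hstab horb
  constructor
  · intro x
    refine ⟨collapseProj G u v x, fun g => ?_⟩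
    rw [Q, collapseProj_smul hstab]
  · intro x y hxy hne
    have hne' : collapseProj G u v x ≠ collapseProj G u v y := fun h => hne ((Q x y).mpr h)
    refine ⟨x, y, hxy, fun g => ?_⟩
    rw [Q, Q, collapseProj_smul hstab, collapseProj_smul hstab]
    constructor
    · rintro ⟨hgx, hgy⟩
      have hx : g • x = x := by
        by_contra hxne
        have hxo : x ∈ MulAction.orbit G u := by
          by_contra hxo
          rw [collapseProj_of_not_mem hxo] at hgx
          exact hxne hgx
        obtain ⟨h, rfl⟩ := MulAction.mem_orbit_iff.mp hxo
        rw [collapseProj_smul_u hstab] at hgx hne'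
        -- hgx : g • (h • v) = h • v
        have hadj1 : T.Adj (h • u) (h • v) := hpres h u v he
        have hadj2 : T.Adj (g • (h • u)) (h • v) := by
          have := hpres g (h • u) (h • v) hadj1
          rwa [hgx] at this
        by_cases hy : g • y = y
        · have hyadj : T.Adj y (g • (h • u)) := by
            have := hpres g (h • u) y hxy
            rw [hy] at this
            exact this.symm
          have hbd : y = h • v :=
            tree_two_paths hT hxy hyadj hadj1 hadj2.symm (Ne.symm hxne)
          rw [hbd, collapseProj_of_not_mem (smul_v_not_mem horb h)] at hne'
          exact hne' rfl
        · have hyo : y ∈ MulAction.orbit G u := by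
            by_contra hyo
            rw [collapseProj_of_not_mem hyo] at hgy
            exact hy hgy
          obtain ⟨k, rfl⟩ := MulAction.mem_orbit_iff.mp hyo
          rw [collapseProj_smul_u hstab] at hgy hne'
          -- hgy : g • (k • v) = k • v
          have hadjk : T.Adj (k • u) (k • v) := hpres k u v he
          have hadjk2 : T.Adj (g • (k • u)) (k • v) := by
            have := hpres g (k • u) (k • v) hadjk
            rwa [hgy] at this
          have hbb : h • u = g • (h • u) := by
            refine tree_three_paths hT hadj1.symm hxy hadjk
              hadj2.symm (hpres g (h • u) (k • u) hxy) hadjk2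
              (Ne.symm (orbit_ne' horb k h)) hne' (orbit_ne' horb h k)
              ?_ ?_
            · rw [← mul_smul]; exact Ne.symm (orbit_ne' horb (g * k) h)
            · rw [← mul_smul]; exact orbit_ne' horb (g * h) k
          exact hxne hbb.symm
      have hy : g • y = y := by
        by_contra hyne
        have hyo : y ∈ MulAction.orbit G u := by
          by_contra hyo
          rw [collapseProj_of_not_mem hyo] at hgy
          exact hyne hgy
        obtain ⟨k, rfl⟩ := MulAction.mem_orbit_iff.mp hyo
        rw [collapseProj_smul_u hstab] at hgy hne'
        have hadjk : T.Adj (k • u) (k • v) := hpres k u v he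
        have hx2 : T.Adj x (g • (k • u)) := by
          have := hpres g x (k • u) hxy
          rwa [hx] at this
        have hk2 : T.Adj (k • v) (g • (k • u)) := by
          have := hpres g (k • u) (k • v) hadjk
          rw [hgy] at this
          exact this.symm
        have hbd : x = k • v :=
          tree_two_paths hT hxy.symm hx2 hadjk hk2 (Ne.symm hyne)
        rw [hbd, collapseProj_of_not_mem (smul_v_not_mem horb k)] at hne'
        exact hne' rfl
      exact ⟨hx, hy⟩
    · rintro ⟨hgx, hgy⟩
      constructor
      · rw [← collapseProj_smul hstab, hgx]
      · rw [← collapseProj_smul hstab, hgy]
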